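/- Let Y* be a {0,1}-valued random variable, S and V random variables on a common probability space with Y* conditionally independent of S given V. Let τ(V) = P(Y*=1 | V). Then Y* is conditionally independent of S given τ(V); that is, P(Y*=1 | S, τ(V)) = P(Y*=1 | τ(V)) almost surely. -/

import Mathlib

open MeasureTheory ProbabilityTheory

lemma comap_comp_le_comap {Ω α β : Type*} [MeasurableSpace α] [MeasurableSpace β]
    (f : Ω → α) {g : α → β} (hg : Measurable g) :
    MeasurableSpace.comap (fun ω => g (f ω)) inferInstance ≤
      MeasurableSpace.comap f inferInstance := by
  rw [show (fun ω => g (f ω)) = g ∘ f from rfl, ← MeasurableSpace.comap_comp]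
  exact MeasurableSpace.comap_mono hg.comap_le

/-- Proposition 1(ii): calibration of the desert decision rule. If
`E[Y* | S, V] = E[Y* | V]` a.s. (conditional independence of the binary `Y*`
and `S` given `V`) and `τ` is a version of `P(Y* = 1 | V)`, then
`P(Y* = 1 | S, τ(V)) = P(Y* = 1 | τ(V))` a.s. -/
theorem desert_rule_calibration
    {Ω γ δ : Type*} [MeasurableSpace Ω] [MeasurableSpace γ] [MeasurableSpace δ]
    (P : Measure Ω) [IsProbabilityMeasure P]
    (Ystar : Ω → ℝ) (V : Ω → γ) (S : Ω → δ)
    (hYstar01 : ∀ ω, Ystar ω = 0 ∨ Ystar ω = 1)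
    (hmYstar : Measurable Ystar) (hmV : Measurable V) (hmS : Measurable S)
    (hCI : P[Ystar | MeasurableSpace.comap (fun ω => (S ω, V ω)) inferInstance]
        =ᵐ[P] P[Ystar | MeasurableSpace.comap V inferInstance])
    (τ : γ → ℝ) (hmτ : Measurable τ)
    (hτ : P[Ystar | MeasurableSpace.comap V inferInstance]
        =ᵐ[P] fun ω => τ (V ω)) :
    P[Ystar | MeasurableSpace.comap (fun ω => (S ω, τ (V ω))) inferInstance]
      =ᵐ[P] P[Ystar | MeasurableSpace.comap (fun ω => τ (V ω)) inferInstance] := by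
  have hmSV_le : MeasurableSpace.comap (fun ω => (S ω, V ω)) inferInstance ≤
      (inferInstance : MeasurableSpace Ω) := (hmS.prodMk hmV).comap_le
  have hmV_le : MeasurableSpace.comap V inferInstance ≤
      (inferInstance : MeasurableSpace Ω) := hmV.comap_le
  have hm1_le : MeasurableSpace.comap (fun ω => (S ω, τ (V ω))) inferInstance ≤
      (inferInstance : MeasurableSpace Ω) := (hmS.prodMk (hmτ.comp hmV)).comap_le
  have hm2_le : MeasurableSpace.comap (fun ω => τ (V ω)) inferInstance ≤
      (inferInstance : MeasurableSpace Ω) := (hmτ.comp hmV).comap_le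
  have hm1_sub : MeasurableSpace.comap (fun ω => (S ω, τ (V ω))) inferInstance ≤
      MeasurableSpace.comap (fun ω => (S ω, V ω)) inferInstance := by
    have := comap_comp_le_comap (fun ω => (S ω, V ω))
      (g := Prod.map (id : δ → δ) τ) (measurable_id.prodMap hmτ)
    simpa [Prod.map] using this
  have hm2_sub : MeasurableSpace.comap (fun ω => τ (V ω)) inferInstance ≤
      MeasurableSpace.comap V inferInstance :=
    comap_comp_le_comap V hmτ
  have hmeas1 : Measurable[MeasurableSpace.comap (fun ω => (S ω, τ (V ω))) inferInstance]
      (fun ω => (S ω, τ (V ω))) := measurable_iff_comap_le.mpr le_rfl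
  have hτm1 : StronglyMeasurable[MeasurableSpace.comap (fun ω => (S ω, τ (V ω))) inferInstance]
      (fun ω => τ (V ω)) := (measurable_snd.comp hmeas1).stronglyMeasurable
  have hτm2 : StronglyMeasurable[MeasurableSpace.comap (fun ω => τ (V ω)) inferInstance]
      (fun ω => τ (V ω)) := (measurable_iff_comap_le.mpr le_rfl).stronglyMeasurable
  have hIntτ : Integrable (fun ω => τ (V ω)) P := integrable_condExp.congr hτ
  have key1 : P[Ystar | MeasurableSpace.comap (fun ω => (S ω, τ (V ω))) inferInstance]
      =ᵐ[P] fun ω => τ (V ω) := by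
    have h1 := (condExp_condExp_of_le (μ := P) (f := Ystar) hm1_sub hmSV_le).symm
    have h2 : P[P[Ystar | MeasurableSpace.comap (fun ω => (S ω, V ω)) inferInstance] |
          MeasurableSpace.comap (fun ω => (S ω, τ (V ω))) inferInstance]
        =ᵐ[P] P[(fun ω => τ (V ω)) |
          MeasurableSpace.comap (fun ω => (S ω, τ (V ω))) inferInstance] :=
      condExp_congr_ae (hCI.trans hτ)
    have h3 : P[(fun ω => τ (V ω)) |
          MeasurableSpace.comap (fun ω => (S ω, τ (V ω))) inferInstance]
        = fun ω => τ (V ω) :=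
      condExp_of_stronglyMeasurable hm1_le hτm1 hIntτ
    exact (h1.trans h2).trans (by rw [h3])
  have key2 : P[Ystar | MeasurableSpace.comap (fun ω => τ (V ω)) inferInstance]
      =ᵐ[P] fun ω => τ (V ω) := by
    have h1 := (condExp_condExp_of_le (μ := P) (f := Ystar) hm2_sub hmV_le).symm
    have h2 : P[P[Ystar | MeasurableSpace.comap V inferInstance] |
          MeasurableSpace.comap (fun ω => τ (V ω)) inferInstance]
        =ᵐ[P] P[(fun ω => τ (V ω)) |
          MeasurableSpace.comap (fun ω => τ (V ω)) inferInstance] :=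
      condExp_congr_ae hτ
    have h3 : P[(fun ω => τ (V ω)) |
          MeasurableSpace.comap (fun ω => τ (V ω)) inferInstance]
        = fun ω => τ (V ω) :=
      condExp_of_stronglyMeasurable hm2_le hτm2 hIntτ
    exact (h1.trans h2).trans (by rw [h3])
  exact key1.trans key2.symm
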